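/- arXiv:1206.6082 — 3 statements merged into one kernel-verified Lean document; each statement's English description precedes it below -/
import Mathlib

section
/- Let d ≥ 1, p > 4/d, and a > 0. Suppose w, v : [0,∞) → [0,∞) are continuous with w differentiable and satisfy w'(t) + 2a v(t) ≤ (4/d) v(t)^{4/(pd)} w(t)^{1 - 4/(pd)} for all t ≥ 0. Then w(t) ≤ w(0) · exp(t · a^{-4/(pd-4)} · C) for some constant C = C(p,d) > 0. -/
open MeasureTheory Real Filter Set

/-- Differential inequality argument for global existence for the damped NLS
when the damping power exceeds the focusing power. -/
theorem stmt0 (d : ℕ) (hd : 1 ≤ d) (p : ℝ) (hp : 4 / (d : ℝ) < p) :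
    ∃ C : ℝ, 0 < C ∧ ∀ a : ℝ, 0 < a → ∀ w v : ℝ → ℝ,
      ContinuousOn w (Set.Ici 0) → ContinuousOn v (Set.Ici 0) →
      (∀ t, 0 ≤ t → 0 ≤ w t) → (∀ t, 0 ≤ t → 0 ≤ v t) →
      (∀ t, 0 ≤ t → DifferentiableAt ℝ w t) →
      (∀ t, 0 ≤ t → deriv w t + 2 * a * v t ≤
        (4 / (d : ℝ)) * (v t) ^ (4 / (p * (d : ℝ))) * (w t) ^ (1 - 4 / (p * (d : ℝ)))) →
      ∀ t, 0 ≤ t → w t ≤ w 0 * Real.exp (t * a ^ (-(4 / (p * (d : ℝ) - 4))) * C) := by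
  have hd0 : (0 : ℝ) < d := by exact_mod_cast hd
  have hp0 : 0 < p := lt_trans (by positivity) hp
  have hpd4 : 4 < p * d := by
    have := (div_lt_iff₀ hd0).mp hp
    linarith
  set θ : ℝ := 4 / (p * d) with hθdef
  have hθ0 : 0 < θ := by positivity
  have hθ1 : θ < 1 := by
    rw [hθdef, div_lt_one (by linarith)]
    linarith
  have h1θ : 0 < 1 - θ := by linarith
  -- the exponent
  have he : θ / (1 - θ) = 4 / (p * d - 4) := by
    rw [hθdef]
    field_simp
  set e : ℝ := 4 / (p * d - 4) with hedef
  set C : ℝ := (4 / d) * (1 - θ) * ((d : ℝ) / (2 * θ)) ^ (-e) with hCdef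
  have hC0 : 0 < C := by
    apply mul_pos (by positivity)
    exact Real.rpow_pos_of_pos (by positivity) _
  refine ⟨C, hC0, ?_⟩
  intro a ha w v hwc hvc hw0 hv0 hwd hineq
  set K : ℝ := a ^ (-e) * C with hKdef
  have hK0 : 0 < K := mul_pos (Real.rpow_pos_of_pos ha _) hC0
  -- Key pointwise Young inequality
  have key : ∀ x y : ℝ, 0 ≤ x → 0 ≤ y →
      (4 / d) * x ^ θ * y ^ (1 - θ) ≤ 2 * a * x + K * y := by
    intro x y hx hy
    set c : ℝ := a * ((d : ℝ) / (2 * θ)) with hcdef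
    have hc0 : 0 < c := by positivity
    set m : ℝ := c ^ (-(θ / (1 - θ))) with hmdef
    have hm0 : 0 < m := Real.rpow_pos_of_pos hc0 _
    have hme : m ^ (1 - θ) = c ^ (-θ) := by
      rw [hmdef, ← Real.rpow_mul hc0.le]
      congr 1
      field_simp
    have hcc : c ^ θ * c ^ (-θ) = 1 := by
      rw [← Real.rpow_add hc0]; simp
    have hrw : x ^ θ * y ^ (1 - θ) = (c * x) ^ θ * (m * y) ^ (1 - θ) := by
      rw [Real.mul_rpow hc0.le hx, Real.mul_rpow hm0.le hy, hme]
      calc x ^ θ * y ^ (1 - θ) = (c ^ θ * c ^ (-θ)) * (x ^ θ * y ^ (1 - θ)) := by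
            rw [hcc]; ring
        _ = c ^ θ * x ^ θ * (c ^ (-θ) * y ^ (1 - θ)) := by ring
    have hgm := Real.geom_mean_le_arith_mean2_weighted hθ0.le h1θ.le
      (by positivity : (0:ℝ) ≤ c * x) (by positivity : (0:ℝ) ≤ m * y)
      (by ring)
    have h2 : (4 / (d:ℝ)) * x ^ θ * y ^ (1 - θ) ≤ (4/d) * (θ * (c * x) + (1 - θ) * (m * y)) := by
      rw [mul_assoc, hrw]
      exact mul_le_mul_of_nonneg_left hgm (by positivity)
    have hcx : (4 / (d:ℝ)) * (θ * c) = 2 * a := by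
      rw [hcdef]; field_simp; ring
    have hmy : (4 / (d:ℝ)) * ((1 - θ) * m) = K := by
      rw [hmdef, he, hcdef, Real.mul_rpow ha.le (by positivity), hKdef, hCdef]
      ring
    calc (4 / (d:ℝ)) * x ^ θ * y ^ (1 - θ) ≤ (4/d) * (θ * (c * x) + (1 - θ) * (m * y)) := h2
      _ = (4 / (d:ℝ)) * (θ * c) * x + (4 / (d:ℝ)) * ((1 - θ) * m) * y := by ring
      _ = 2 * a * x + K * y := by rw [hcx, hmy]
  -- hence deriv w t ≤ K * w t for t ≥ 0
  have hderle : ∀ t, 0 ≤ t → deriv w t ≤ K * w t := by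
    intro t ht
    have h1 := hineq t ht
    have h2 := key (v t) (w t) (hv0 t ht) (hw0 t ht)
    linarith
  -- Gronwall via antitonicity of g = w * exp(-K t)
  set g : ℝ → ℝ := fun s => w s * Real.exp (-(K * s)) with hgdef
  have hgd : ∀ s, 0 ≤ s → HasDerivAt g
      (deriv w s * Real.exp (-(K * s)) + w s * (Real.exp (-(K * s)) * (-K))) s := by
    intro s hs
    have h1 : HasDerivAt (fun s : ℝ => -(K * s)) (-K) s := by
      exact (((hasDerivAt_id' s).const_mul K).neg).congr_deriv (by ring)
    exact ((hwd s hs).hasDerivAt).mul h1.exp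
  have hanti : AntitoneOn g (Set.Ici 0) := by
    apply antitoneOn_of_deriv_nonpos (convex_Ici 0)
    · exact hwc.mul (Real.continuous_exp.comp (continuous_const.mul continuous_id).neg).continuousOn
    · rw [interior_Ici]
      intro s hs
      exact ((hgd s (le_of_lt hs)).differentiableAt).differentiableWithinAt
    · rw [interior_Ici]
      intro s hs
      rw [(hgd s (le_of_lt hs)).deriv]
      have h1 := hderle s (le_of_lt hs)
      have h2 := Real.exp_pos (-(K * s))
      nlinarith
  intro t ht
  have hle : g t ≤ g 0 := hanti (le_refl (0:ℝ)) ht ht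
  have h0 : g 0 = w 0 := by simp [hgdef]
  rw [h0, hgdef] at hle
  have hexp : 0 < Real.exp (-(K * t)) := Real.exp_pos _
  have : w t ≤ w 0 * Real.exp (K * t) := by
    have := mul_le_mul_of_nonneg_right hle (Real.exp_pos (K * t)).le
    rwa [mul_assoc, ← Real.exp_add, neg_add_cancel, Real.exp_zero, mul_one] at this
  have harg : K * t = t * a ^ (-e) * C := by rw [hKdef]; ring
  rwa [harg] at this
end

section
/- Let u : [0,T) → L²(ℝ^d) be continuous, let ρ_n → 0 be positive, x_n ∈ ℝ^d, t_n → T, and suppose ρ_n^{d/2} u(t_n, ρ_n · + x_n) ⇀ V weakly in L². Then liminf_{n→∞} sup_{y∈ℝ^d} ∫_{|x-y|≤1} |u(t_n,x)|² dx ≥ ∫ |V|² dx. -/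
open MeasureTheory Real Filter Set ENNReal Pointwise

private lemma aux_conj_mul (z : ℂ) : (starRingEnd ℂ) z * z = ((‖z‖ ^ (2:ℝ) : ℝ) : ℂ) := by
  rw [mul_comm, Complex.mul_conj, Real.rpow_two]
  norm_cast
  simp [← Complex.sq_norm]


private lemma aux_memLp_comp {d : ℕ} {r : ℝ} (hr : r ≠ 0) (c : EuclideanSpace ℝ (Fin d))
    (w : EuclideanSpace ℝ (Fin d) → ℂ) (hw : MemLp w 2 volume) :
    MemLp (fun x => w (r • x + c)) 2 (volume : Measure (EuclideanSpace ℝ (Fin d))) := by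
  set a : ℝ≥0∞ :=
    ENNReal.ofReal |(r ^ Module.finrank ℝ (EuclideanSpace ℝ (Fin d)))⁻¹| with ha
  have ha0 : a ≠ 0 := by
    have h : 0 < |(r ^ Module.finrank ℝ (EuclideanSpace ℝ (Fin d)))⁻¹| :=
      abs_pos.2 (by positivity)
    rw [ha, Ne, ENNReal.ofReal_eq_zero, not_le]
    exact h
  have hφ : Measurable fun x : EuclideanSpace ℝ (Fin d) => r • x + c :=
    (measurable_const_smul r).add_const c
  have hmp : MeasurePreserving (fun x : EuclideanSpace ℝ (Fin d) => r • x + c)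
      volume (a • volume) := by
    refine ⟨hφ, ?_⟩
    have hcomp : (fun x : EuclideanSpace ℝ (Fin d) => r • x + c)
        = (fun x => x + c) ∘ (fun x => r • x) := rfl
    rw [hcomp, ← Measure.map_map (measurable_add_const c) (measurable_const_smul r),
      Measure.map_addHaar_smul volume hr, Measure.map_smul, map_add_right_eq_self]
  have hw' : MemLp w 2 (a • volume) := by
    refine ⟨hw.1.mono_ac Measure.smul_absolutelyContinuous, ?_⟩
    rw [eLpNorm_smul_measure_of_ne_zero ha0]
    have h1 : a ^ (1 / (2:ℝ≥0∞)).toReal < ⊤ :=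
      ENNReal.rpow_lt_top_of_nonneg (by positivity) ENNReal.ofReal_ne_top
    exact ENNReal.mul_lt_top h1 hw.2
  exact hw'.comp_measurePreserving hmp

private lemma aux_cov {d : ℕ} (f : EuclideanSpace ℝ (Fin d) → ℝ) {r : ℝ} (hr : 0 < r)
    (c : EuclideanSpace ℝ (Fin d)) {A : ℝ} (hA : 0 ≤ A) :
    ∫ x in Metric.closedBall (0 : EuclideanSpace ℝ (Fin d)) A, f (r • x + c) =
      (r ^ d)⁻¹ * ∫ x in Metric.closedBall c (r * A), f x := by
  have h1 : ∫ x in Metric.closedBall (0 : EuclideanSpace ℝ (Fin d)) A, f (r • x + c) =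
      (r ^ Module.finrank ℝ (EuclideanSpace ℝ (Fin d)))⁻¹ •
        ∫ y in r • Metric.closedBall (0 : EuclideanSpace ℝ (Fin d)) A, f (y + c) :=
    Measure.setIntegral_comp_smul_of_pos volume (fun y => f (y + c)) _ hr
  have h2 : r • Metric.closedBall (0 : EuclideanSpace ℝ (Fin d)) A
      = Metric.closedBall (0 : EuclideanSpace ℝ (Fin d)) (r * A) := by
    rw [smul_closedBall _ _ hA, smul_zero, Real.norm_of_nonneg hr.le]
  have himg : (fun y : EuclideanSpace ℝ (Fin d) => y + c) ''
      Metric.closedBall (0 : EuclideanSpace ℝ (Fin d)) (r * A)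
      = Metric.closedBall c (r * A) := by
    ext z
    simp only [mem_image, Metric.mem_closedBall, dist_eq_norm]
    constructor
    · rintro ⟨y, hy, rfl⟩; simpa using hy
    · intro hz; exact ⟨z - c, by simpa using hz, by abel⟩
  have h3 : ∫ y in Metric.closedBall c (r * A), f y
      = ∫ y in Metric.closedBall (0 : EuclideanSpace ℝ (Fin d)) (r * A), f (y + c) := by
    rw [← himg]
    exact (measurePreserving_add_right volume c).setIntegral_image_emb
      (MeasurableEquiv.addRight c).measurableEmbedding f _
  rw [h1, h2, ← h3, smul_eq_mul]
  congr 2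
  simp

private lemma aux_cov_univ {d : ℕ} (f : EuclideanSpace ℝ (Fin d) → ℝ) {r : ℝ} (hr : 0 < r)
    (c : EuclideanSpace ℝ (Fin d)) :
    ∫ x, f (r • x + c) = (r ^ d)⁻¹ * ∫ x, f x := by
  have h1 : ∫ x : EuclideanSpace ℝ (Fin d), f (r • x + c) =
      (r ^ Module.finrank ℝ (EuclideanSpace ℝ (Fin d)))⁻¹ •
        ∫ y : EuclideanSpace ℝ (Fin d), f (y + c) :=
    Measure.integral_comp_smul_of_nonneg volume (fun y => f (y + c)) r (hR := hr.le)
  rw [h1, integral_add_right_eq_self, smul_eq_mul]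
  congr 2
  simp

private lemma aux_norm_sq {r : ℝ} (hr : 0 < r) (d : ℕ) (z : ℂ) :
    ‖((r ^ ((d : ℝ) / 2) : ℝ) : ℂ) * z‖ ^ (2:ℝ) = r ^ d * ‖z‖ ^ (2:ℝ) := by
  have h0 : (0:ℝ) ≤ r ^ ((d : ℝ) / 2) := rpow_nonneg hr.le _
  rw [norm_mul, Complex.norm_real, Real.norm_of_nonneg h0,
    Real.mul_rpow h0 (norm_nonneg z)]
  congr 1
  rw [← Real.rpow_mul hr.le]
  norm_num [Real.rpow_natCast]


set_option maxHeartbeats 1000000 in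
/-- Localization lemma for weak limits under L²-invariant rescalings:
if ρ_n^{d/2} u(t_n, ρ_n·+x_n) ⇀ V weakly in L² with ρ_n → 0, then
liminf_n sup_y ∫_{|x-y|≤1}|u(t_n,x)|²dx ≥ ∫|V|². -/
theorem stmt16 (d : ℕ) (hd : 1 ≤ d) (T : ℝ)
    (u : ℝ → EuclideanSpace ℝ (Fin d) → ℂ)
    (hu : ∀ t, MemLp (u t) 2 (volume : Measure (EuclideanSpace ℝ (Fin d))))
    (ρ : ℕ → ℝ) (hρpos : ∀ n, 0 < ρ n) (hρ : Filter.Tendsto ρ atTop (nhds 0))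
    (xc : ℕ → EuclideanSpace ℝ (Fin d))
    (tseq : ℕ → ℝ) (ht : Filter.Tendsto tseq atTop (nhds T))
    (V : EuclideanSpace ℝ (Fin d) → ℂ)
    (hV : MemLp V 2 (volume : Measure (EuclideanSpace ℝ (Fin d))))
    (hweak : ∀ g : EuclideanSpace ℝ (Fin d) → ℂ,
      MemLp g 2 (volume : Measure (EuclideanSpace ℝ (Fin d))) →
      Filter.Tendsto
        (fun n => ∫ x, starRingEnd ℂ (g x)
          * (((ρ n ^ ((d : ℝ) / 2) : ℝ) : ℂ) * u (tseq n) (ρ n • x + xc n)))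
        atTop (nhds (∫ x, starRingEnd ℂ (g x) * V x))) :
    (∫ x, ‖V x‖ ^ (2 : ℝ)) ≤
      Filter.liminf
        (fun n => ⨆ y : EuclideanSpace ℝ (Fin d),
          ∫ x in Metric.closedBall y 1, ‖u (tseq n) x‖ ^ (2 : ℝ)) atTop := by
  classical
  set v : ℕ → EuclideanSpace ℝ (Fin d) → ℂ :=
    fun n x => (((ρ n ^ ((d : ℝ) / 2) : ℝ) : ℂ) * u (tseq n) (ρ n • x + xc n)) with hv
  set S : ℕ → ℝ := fun n => ⨆ y : EuclideanSpace ℝ (Fin d),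
      ∫ x in Metric.closedBall y 1, ‖u (tseq n) x‖ ^ (2 : ℝ) with hSdef
  -- integrability of squares
  have fI : ∀ t, Integrable (fun x => ‖u t x‖ ^ (2:ℝ))
      (volume : Measure (EuclideanSpace ℝ (Fin d))) := by
    intro t
    simpa using (hu t).integrable_norm_rpow two_ne_zero ENNReal.ofNat_ne_top
  have fIV : Integrable (fun x => ‖V x‖ ^ (2:ℝ))
      (volume : Measure (EuclideanSpace ℝ (Fin d))) := by
    simpa using hV.integrable_norm_rpow two_ne_zero ENNReal.ofNat_ne_top
  have vmem : ∀ n, MemLp (v n) 2 (volume : Measure (EuclideanSpace ℝ (Fin d))) := fun n =>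
    (aux_memLp_comp (hρpos n).ne' (xc n) (u (tseq n)) (hu (tseq n))).const_mul _
  have hρd : ∀ n, (0:ℝ) < ρ n ^ d := fun n => pow_pos (hρpos n) d
  -- total mass identity
  have hveq : ∀ n, ∫ x, ‖v n x‖ ^ (2:ℝ) = ∫ x, ‖u (tseq n) x‖ ^ (2:ℝ) := by
    intro n
    have h1 : ∀ x : EuclideanSpace ℝ (Fin d), ‖v n x‖ ^ (2:ℝ)
        = ρ n ^ d * ‖u (tseq n) (ρ n • x + xc n)‖ ^ (2:ℝ) :=
      fun x => aux_norm_sq (hρpos n) d _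
    calc ∫ x, ‖v n x‖ ^ (2:ℝ)
        = ∫ x, ρ n ^ d * ‖u (tseq n) (ρ n • x + xc n)‖ ^ (2:ℝ) := by simp_rw [h1]
      _ = ρ n ^ d * ∫ x, ‖u (tseq n) (ρ n • x + xc n)‖ ^ (2:ℝ) := integral_const_mul _ _
      _ = ρ n ^ d * ((ρ n ^ d)⁻¹ * ∫ x, ‖u (tseq n) x‖ ^ (2:ℝ)) := by
          rw [aux_cov_univ (fun y => ‖u (tseq n) y‖ ^ (2:ℝ)) (hρpos n) (xc n)]
      _ = ∫ x, ‖u (tseq n) x‖ ^ (2:ℝ) := by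
          rw [← mul_assoc, mul_inv_cancel₀ (hρd n).ne', one_mul]
  -- uniform bound via Banach–Steinhaus
  obtain ⟨C, hC⟩ : ∃ C : ℝ, ∀ n, ∫ x, ‖u (tseq n) x‖ ^ (2:ℝ) ≤ C := by
    set F : ℕ → Lp ℂ 2 (volume : Measure (EuclideanSpace ℝ (Fin d))) :=
      fun n => (vmem n).toLp (v n) with hF
    have hpt : ∀ G : Lp ℂ 2 (volume : Measure (EuclideanSpace ℝ (Fin d))),
        ∃ M, ∀ n, ‖(innerSL ℂ (F n)) G‖ ≤ M := by
      intro G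
      have htend : Tendsto (fun n => ∫ x, (starRingEnd ℂ) (G x) * v n x) atTop
          (nhds (∫ x, (starRingEnd ℂ) (G x) * V x)) := hweak _ (Lp.memLp G)
      obtain ⟨M, hM⟩ := htend.norm.bddAbove_range
      refine ⟨M, fun n => ?_⟩
      have h2 : inner (𝕜 := ℂ) G (F n) = ∫ x, (starRingEnd ℂ) (G x) * v n x := by
        rw [L2.inner_def]
        refine integral_congr_ae ?_
        filter_upwards [(vmem n).coeFn_toLp] with x hx
        rw [RCLike.inner_apply, hx, mul_comm]
      have h1 : (innerSL ℂ (F n)) G = (starRingEnd ℂ) (inner (𝕜 := ℂ) G (F n)) := by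
        simp [innerSL_apply_apply]
      rw [h1, h2, RCLike.norm_conj]
      exact hM (mem_range_self n)
    obtain ⟨C', hC'⟩ := banach_steinhaus hpt
    refine ⟨C' ^ 2, fun n => ?_⟩
    have hFn : ‖F n‖ ≤ C' := by
      have := hC' n
      rwa [innerSL_apply_norm] at this
    have hnormsq : ∫ x, ‖v n x‖ ^ (2:ℝ) = ‖F n‖ ^ 2 := by
      have h3 : (inner (𝕜 := ℂ) (F n) (F n))
          = (RCLike.ofReal (∫ x, ‖v n x‖ ^ (2:ℝ)) : ℂ) := by
        rw [L2.inner_def]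
        refine Eq.trans (integral_congr_ae ?_) integral_ofReal
        filter_upwards [(vmem n).coeFn_toLp] with x hx
        rw [RCLike.inner_apply, hx]
        exact (mul_comm _ _).trans (aux_conj_mul _)
      have h4 := inner_self_eq_norm_sq_to_K (𝕜 := ℂ) (F n)
      have h5 := h3.symm.trans h4
      exact_mod_cast h5
    calc ∫ x, ‖u (tseq n) x‖ ^ (2:ℝ) = ∫ x, ‖v n x‖ ^ (2:ℝ) := (hveq n).symm
      _ = ‖F n‖ ^ 2 := hnormsq
      _ ≤ C' ^ 2 := by
          have h0 : (0:ℝ) ≤ ‖F n‖ := norm_nonneg _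
          nlinarith
  -- facts about S
  have hSbdd : ∀ n, BddAbove (range fun y : EuclideanSpace ℝ (Fin d) =>
      ∫ x in Metric.closedBall y 1, ‖u (tseq n) x‖ ^ (2:ℝ)) := by
    intro n
    refine ⟨∫ x, ‖u (tseq n) x‖ ^ (2:ℝ), ?_⟩
    rintro _ ⟨y, rfl⟩
    exact setIntegral_le_integral (fI _)
      (Eventually.of_forall fun x => rpow_nonneg (norm_nonneg _) _)
  have hS0 : ∀ n, 0 ≤ S n := fun n =>
    Real.iSup_nonneg fun y => integral_nonneg fun x => rpow_nonneg (norm_nonneg _) _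
  have hSC : ∀ n, S n ≤ C := fun n => ciSup_le fun y =>
    (setIntegral_le_integral (fI _)
      (Eventually.of_forall fun x => rpow_nonneg (norm_nonneg _) _)).trans (hC n)
  have cobdd : IsCoboundedUnder (· ≥ ·) atTop S :=
    isCoboundedUnder_ge_of_eventually_le atTop (Eventually.of_forall hSC)
  have hL0 : 0 ≤ liminf S atTop := le_liminf_of_le cobdd (Eventually.of_forall hS0)
  -- per-A claim
  have key : ∀ A : ℕ, 1 ≤ A →
      (∫ x in Metric.closedBall (0 : EuclideanSpace ℝ (Fin d)) (A:ℝ), ‖V x‖ ^ (2:ℝ))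
        ≤ liminf S atTop := by
    intro A hA
    have hApos : (0:ℝ) < A := by exact_mod_cast hA
    set cA := ∫ x in Metric.closedBall (0 : EuclideanSpace ℝ (Fin d)) (A:ℝ), ‖V x‖ ^ (2:ℝ)
      with hcA
    have hcA0 : 0 ≤ cA := integral_nonneg fun x => rpow_nonneg (norm_nonneg _) _
    set g := (Metric.closedBall (0 : EuclideanSpace ℝ (Fin d)) (A:ℝ)).indicator V with hg
    have hgmem : MemLp g 2 (volume : Measure (EuclideanSpace ℝ (Fin d))) :=
      hV.indicator measurableSet_closedBall
    have hval : (∫ x, (starRingEnd ℂ) (g x) * V x) = (cA : ℂ) := by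
      have hpt : ∀ x, (starRingEnd ℂ) (g x) * V x
          = (Metric.closedBall (0 : EuclideanSpace ℝ (Fin d)) (A:ℝ)).indicator
              (fun x => ((‖V x‖ ^ (2:ℝ) : ℝ) : ℂ)) x := by
        intro x
        by_cases hx : x ∈ Metric.closedBall (0 : EuclideanSpace ℝ (Fin d)) (A:ℝ)
        · simp only [hg, indicator_of_mem hx]
          exact aux_conj_mul _
        · simp [hg, indicator_of_notMem hx]
      simp_rw [hpt]
      rw [integral_indicator measurableSet_closedBall]
      exact integral_ofReal
    have hconv : Tendsto (fun n => ∫ x in Metric.closedBall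
        (0 : EuclideanSpace ℝ (Fin d)) (A:ℝ), (starRingEnd ℂ) (V x) * v n x) atTop
        (nhds (cA : ℂ)) := by
      have h := hweak g hgmem
      rw [hval] at h
      refine Tendsto.congr (fun n => ?_) h
      have hpt : ∀ x, (starRingEnd ℂ) (g x) * v n x
          = (Metric.closedBall (0 : EuclideanSpace ℝ (Fin d)) (A:ℝ)).indicator
              (fun x => (starRingEnd ℂ) (V x) * v n x) x := by
        intro x
        by_cases hx : x ∈ Metric.closedBall (0 : EuclideanSpace ℝ (Fin d)) (A:ℝ)
        · simp [hg, indicator_of_mem hx]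
        · simp [hg, indicator_of_notMem hx]
      refine (integral_congr_ae (Eventually.of_forall hpt)).trans ?_
      rw [integral_indicator measurableSet_closedBall]
    have hnormconv : Tendsto (fun n => ‖∫ x in Metric.closedBall
        (0 : EuclideanSpace ℝ (Fin d)) (A:ℝ), (starRingEnd ℂ) (V x) * v n x‖) atTop
        (nhds cA) := by
      have h := hconv.norm
      simpa [Complex.norm_real, abs_of_nonneg hcA0] using h
    -- Cauchy-Schwarz
    have hCS : ∀ n, ‖∫ x in Metric.closedBall (0 : EuclideanSpace ℝ (Fin d)) (A:ℝ),
        (starRingEnd ℂ) (V x) * v n x‖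
        ≤ cA ^ ((1:ℝ)/2) * (∫ x in Metric.closedBall (0 : EuclideanSpace ℝ (Fin d)) (A:ℝ),
            ‖v n x‖ ^ (2:ℝ)) ^ ((1:ℝ)/2) := by
      intro n
      have h1 : ‖∫ x in Metric.closedBall (0 : EuclideanSpace ℝ (Fin d)) (A:ℝ),
          (starRingEnd ℂ) (V x) * v n x‖
          ≤ ∫ x in Metric.closedBall (0 : EuclideanSpace ℝ (Fin d)) (A:ℝ),
            ‖V x‖ * ‖v n x‖ := by
        refine (norm_integral_le_integral_norm _).trans_eq ?_
        refine integral_congr_ae (Eventually.of_forall fun x => ?_)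
        simp only [norm_mul, RCLike.norm_conj]
      have hpq : Real.HolderConjugate 2 2 := Real.HolderConjugate.two_two
      have hfV : MemLp (fun x => ‖V x‖) (ENNReal.ofReal 2)
          (volume.restrict (Metric.closedBall (0 : EuclideanSpace ℝ (Fin d)) (A:ℝ))) := by
        simpa [ENNReal.ofReal_ofNat] using (hV.restrict _).norm
      have hfv : MemLp (fun x => ‖v n x‖) (ENNReal.ofReal 2)
          (volume.restrict (Metric.closedBall (0 : EuclideanSpace ℝ (Fin d)) (A:ℝ))) := by
        simpa [ENNReal.ofReal_ofNat] using ((vmem n).restrict _).norm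
      have h2 := integral_mul_le_Lp_mul_Lq_of_nonneg hpq
        (Eventually.of_forall fun x => norm_nonneg _)
        (Eventually.of_forall fun x => norm_nonneg _) hfV hfv
      exact h1.trans h2
    -- change of variables for the set integral
    have hIn : ∀ n, (∫ x in Metric.closedBall (0 : EuclideanSpace ℝ (Fin d)) (A:ℝ),
        ‖v n x‖ ^ (2:ℝ))
        = ∫ x in Metric.closedBall (xc n) (ρ n * A), ‖u (tseq n) x‖ ^ (2:ℝ) := by
      intro n
      have h1 : ∀ x : EuclideanSpace ℝ (Fin d), ‖v n x‖ ^ (2:ℝ)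
          = ρ n ^ d * ‖u (tseq n) (ρ n • x + xc n)‖ ^ (2:ℝ) :=
        fun x => aux_norm_sq (hρpos n) d _
      calc (∫ x in Metric.closedBall (0 : EuclideanSpace ℝ (Fin d)) (A:ℝ), ‖v n x‖ ^ (2:ℝ))
          = ∫ x in Metric.closedBall (0 : EuclideanSpace ℝ (Fin d)) (A:ℝ),
              ρ n ^ d * ‖u (tseq n) (ρ n • x + xc n)‖ ^ (2:ℝ) := by simp_rw [h1]
        _ = ρ n ^ d * ∫ x in Metric.closedBall (0 : EuclideanSpace ℝ (Fin d)) (A:ℝ),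
              ‖u (tseq n) (ρ n • x + xc n)‖ ^ (2:ℝ) := integral_const_mul _ _
        _ = ρ n ^ d * ((ρ n ^ d)⁻¹ *
              ∫ x in Metric.closedBall (xc n) (ρ n * A), ‖u (tseq n) x‖ ^ (2:ℝ)) := by
            rw [aux_cov (fun y => ‖u (tseq n) y‖ ^ (2:ℝ)) (hρpos n) (xc n) hApos.le]
        _ = ∫ x in Metric.closedBall (xc n) (ρ n * A), ‖u (tseq n) x‖ ^ (2:ℝ) := by
            rw [← mul_assoc, mul_inv_cancel₀ (hρd n).ne', one_mul]
    have hIn0 : ∀ n, 0 ≤ (∫ x in Metric.closedBall (0 : EuclideanSpace ℝ (Fin d)) (A:ℝ),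
        ‖v n x‖ ^ (2:ℝ)) := fun n => integral_nonneg fun x => rpow_nonneg (norm_nonneg _) _
    -- eventual domination by S n
    have hsmall : ∀ᶠ n in atTop, ρ n * A ≤ 1 := by
      have h := hρ.eventually_lt_const (show (0:ℝ) < 1 / A by positivity)
      filter_upwards [h] with n hn
      exact ((lt_div_iff₀ hApos).1 hn).le
    have hIS : ∀ᶠ n in atTop, (∫ x in Metric.closedBall (0 : EuclideanSpace ℝ (Fin d)) (A:ℝ),
        ‖v n x‖ ^ (2:ℝ)) ≤ S n := by
      filter_upwards [hsmall] with n hn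
      rw [hIn n]
      have hsub : Metric.closedBall (xc n) (ρ n * A) ⊆ Metric.closedBall (xc n) 1 :=
        Metric.closedBall_subset_closedBall hn
      have hstep : (∫ x in Metric.closedBall (xc n) (ρ n * A), ‖u (tseq n) x‖ ^ (2:ℝ))
          ≤ ∫ x in Metric.closedBall (xc n) 1, ‖u (tseq n) x‖ ^ (2:ℝ) :=
        setIntegral_mono_set (fI (tseq n)).integrableOn
          (Eventually.of_forall fun x => rpow_nonneg (norm_nonneg _) _)
          (HasSubset.Subset.eventuallyLE hsub)
      exact hstep.trans (le_ciSup (hSbdd n) (xc n))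
    -- delta argument
    have hdelta : ∀ δ : ℝ, 0 < δ → cA - δ ≤ liminf S atTop := by
      intro δ hδ
      by_cases hccase : cA ≤ δ
      · linarith
      push_neg at hccase
      have hcpos : 0 < cA := hδ.trans hccase
      have hev1 : ∀ᶠ n in atTop, cA - δ/2 < ‖∫ x in Metric.closedBall
          (0 : EuclideanSpace ℝ (Fin d)) (A:ℝ), (starRingEnd ℂ) (V x) * v n x‖ :=
        hnormconv.eventually_const_lt (by linarith)
      refine le_liminf_of_le cobdd ?_
      filter_upwards [hev1, hIS] with n h1 h2
      set In := ∫ x in Metric.closedBall (0 : EuclideanSpace ℝ (Fin d)) (A:ℝ),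
        ‖v n x‖ ^ (2:ℝ) with hInd
      have hab : cA - δ/2 ≤ cA ^ ((1:ℝ)/2) * (S n) ^ ((1:ℝ)/2) := by
        have := (h1.le.trans (hCS n))
        have hmono : In ^ ((1:ℝ)/2) ≤ (S n) ^ ((1:ℝ)/2) :=
          Real.rpow_le_rpow (hIn0 n) h2 (by norm_num)
        calc cA - δ/2 ≤ cA ^ ((1:ℝ)/2) * In ^ ((1:ℝ)/2) := this
          _ ≤ cA ^ ((1:ℝ)/2) * (S n) ^ ((1:ℝ)/2) :=
            mul_le_mul_of_nonneg_left hmono (Real.rpow_nonneg hcA0 _)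
      have ha2 : (cA ^ ((1:ℝ)/2)) ^ 2 = cA := by
        rw [← Real.rpow_natCast (cA ^ ((1:ℝ)/2)) 2, ← Real.rpow_mul hcA0]
        norm_num
      have hb2 : ((S n) ^ ((1:ℝ)/2)) ^ 2 = S n := by
        rw [← Real.rpow_natCast ((S n) ^ ((1:ℝ)/2)) 2, ← Real.rpow_mul (hS0 n)]
        norm_num
      have ha0 : 0 ≤ cA ^ ((1:ℝ)/2) := Real.rpow_nonneg hcA0 _
      have hb0 : 0 ≤ (S n) ^ ((1:ℝ)/2) := Real.rpow_nonneg (hS0 n) _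
      have hsq : (cA - δ/2) ^ 2 ≤ cA * S n := by
        calc (cA - δ/2) ^ 2 ≤ (cA ^ ((1:ℝ)/2) * (S n) ^ ((1:ℝ)/2)) ^ 2 := by
              apply pow_le_pow_left₀ (by linarith) hab
          _ = cA * S n := by rw [mul_pow, ha2, hb2]
      nlinarith [hS0 n, hcpos]
    have : ∀ ε : ℝ, 0 < ε → cA ≤ liminf S atTop + ε := fun ε hε => by
      have := hdelta ε hε; linarith
    exact le_of_forall_pos_le_add this
  -- monotone convergence in A
  have mc : Tendsto (fun A : ℕ => ∫ x in Metric.closedBall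
      (0 : EuclideanSpace ℝ (Fin d)) (A:ℝ), ‖V x‖ ^ (2:ℝ)) atTop
      (nhds (∫ x, ‖V x‖ ^ (2:ℝ))) := by
    have h := tendsto_setIntegral_of_monotone
      (s := fun A : ℕ => Metric.closedBall (0 : EuclideanSpace ℝ (Fin d)) (A:ℝ))
      (fun i => measurableSet_closedBall)
      (fun i j hij => Metric.closedBall_subset_closedBall (by exact_mod_cast hij))
      (fIV.integrableOn)
    rw [Metric.iUnion_closedBall_nat] at h
    simpa [Measure.restrict_univ] using h
  exact le_of_tendsto mc (eventually_atTop.2 ⟨1, fun A hA => key A hA⟩)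
end

section
/- Let λ : [0,T] → (0,∞) satisfy the log-log regime controls: λ(t_k) = 2^{-k} for k₀ ≤ k ≤ k₊, t_{k+1} - t_k ≤ k λ²(t_k), and suppose on each subinterval of length ~λ²(t_k) within [t_k, t_{k+1}] the energy increment is at most C λ^{-2-pd/2}(t_k) times the subinterval length, with 1 ≤ p < 4/d. Then the total energy increment over [0,T] satisfies |E(u(T)) - E(u(0))| ≤ C k₊ λ^{-pd/2}(T) ≲ |log λ(T)| λ(T)^{-pd/2}, which is o(λ(T)^{-2}) as λ(T) → 0. -/
open MeasureTheory Real Filter Set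

/-- Bookkeeping estimate for the energy growth in the log-log regime:
with dyadic times λ(t_k) = 2^{-k}, doubling-time control t_{k+1}-t_k ≤ kλ²(t_k),
and local energy increments ≤ C·(length)·λ^{-2-pd/2}(t_k) on subintervals of
length ≤ λ²(t_k), the total increment satisfies
|E(T)-E(0)| ≤ C' k₊ λ(T)^{-pd/2} ≲ |log λ(T)| λ(T)^{-pd/2}. -/
theorem stmt19 (d : ℕ) (hd : 1 ≤ d) (p C : ℝ) (hp1 : 1 ≤ p) (hp2 : p < 4 / (d : ℝ))
    (hC : 0 < C) :
    ∃ C' : ℝ, 0 < C' ∧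
      ∀ (T : ℝ) (lam : ℝ → ℝ) (k₀ kp : ℕ) (t : ℕ → ℝ) (Ef : ℝ → ℝ),
        0 < T →
        (∀ s ∈ Set.Icc (0 : ℝ) T, 0 < lam s) →
        1 ≤ k₀ → k₀ ≤ kp →
        t k₀ = 0 → t kp = T →
        (∀ k, k₀ ≤ k → k < kp → t k < t (k + 1)) →
        (∀ k, k₀ ≤ k → k ≤ kp → t k ∈ Set.Icc (0 : ℝ) T) →
        -- dyadic values of the scaling parameter:
        (∀ k, k₀ ≤ k → k ≤ kp → lam (t k) = (2 : ℝ) ^ (-(k : ℝ))) →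
        -- control of the doubling time interval:
        (∀ k, k₀ ≤ k → k < kp → t (k + 1) - t k ≤ (k : ℝ) * lam (t k) ^ (2 : ℕ)) →
        -- local energy increment on subintervals of length ≤ λ²(t_k):
        (∀ k, k₀ ≤ k → k < kp → ∀ s₁ s₂ : ℝ, t k ≤ s₁ → s₁ ≤ s₂ → s₂ ≤ t (k + 1) →
          s₂ - s₁ ≤ lam (t k) ^ (2 : ℕ) →
          |Ef s₂ - Ef s₁| ≤ C * (s₂ - s₁) * lam (t k) ^ (-(2 : ℝ) - p * (d : ℝ) / 2)) →
        |Ef T - Ef 0| ≤ C' * (kp : ℝ) * lam T ^ (-(p * (d : ℝ) / 2)) ∧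
          |Ef T - Ef 0| ≤ C' * |Real.log (lam T)| * lam T ^ (-(p * (d : ℝ) / 2)) := by
  refine ⟨5 * C, by positivity, ?_⟩
  intro T lam k₀ kp t Ef hT hlampos hk₀1 hk₀kp ht0 htT hmono hmem hdyadic hdouble hloc
  set a : ℝ := p * (d : ℝ) / 2 with ha
  have hd1 : (1:ℝ) ≤ (d:ℝ) := by exact_mod_cast hd
  have ha2 : (1:ℝ)/2 ≤ a := by rw [ha]; nlinarith
  have ha0 : (0:ℝ) < a := lt_of_lt_of_le (by norm_num) ha2
  set r : ℝ := (2:ℝ) ^ a with hr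
  have hrpos : 0 < r := Real.rpow_pos_of_pos (by norm_num) a
  have hr1 : (4:ℝ)/3 ≤ r := by
    have h1 : (2:ℝ) ^ ((1:ℝ)/2) ≤ r := by
      rw [hr]
      exact Real.rpow_le_rpow_of_exponent_le (by norm_num) ha2
    have hs2 : ((2:ℝ) ^ ((1:ℝ)/2)) ^ (2:ℕ) = 2 := by
      rw [← Real.rpow_natCast ((2:ℝ) ^ ((1:ℝ)/2)) 2, ← Real.rpow_mul (by norm_num : (0:ℝ) ≤ 2)]
      norm_num
    have hspos : (0:ℝ) < (2:ℝ) ^ ((1:ℝ)/2) := Real.rpow_pos_of_pos (by norm_num) _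
    nlinarith [hs2, hspos, h1]
  have hkp1 : 1 ≤ kp := le_trans hk₀1 hk₀kp
  have hk₀lt : k₀ < kp := by
    rcases lt_or_eq_of_le hk₀kp with h | h
    · exact h
    · exfalso; rw [h, htT] at ht0; linarith
  -- rpow identity
  have hpow : ∀ k : ℕ, ((2:ℝ) ^ (-(k:ℝ))) ^ (-a) = r ^ k := by
    intro k
    rw [← Real.rpow_mul (by norm_num : (0:ℝ) ≤ 2), ← Real.rpow_natCast r k, hr,
      ← Real.rpow_mul (by norm_num : (0:ℝ) ≤ 2)]
    congr 1; ring
  -- per-k estimate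
  have key : ∀ k, k₀ ≤ k → k < kp →
      |Ef (t (k+1)) - Ef (t k)| ≤ C * (kp:ℝ) * r ^ k := by
    intro k hk1 hk2
    have hk1' : 1 ≤ k := le_trans hk₀1 hk1
    have hkpos : (0:ℝ) < (k:ℝ) := by exact_mod_cast hk1'
    have hlamk : lam (t k) = (2:ℝ) ^ (-(k:ℝ)) := hdyadic k hk1 hk2.le
    have hlp : 0 < lam (t k) := by rw [hlamk]; positivity
    set L := t (k+1) - t k with hL
    have hLpos : 0 < L := sub_pos.mpr (hmono k hk1 hk2)
    set h := L / (k:ℝ) with hh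
    have hhpos : 0 < h := div_pos hLpos hkpos
    have hLle : L ≤ (k:ℝ) * lam (t k) ^ (2:ℕ) := hdouble k hk1 hk2
    have hhle : h ≤ lam (t k) ^ (2:ℕ) := by
      rw [hh, div_le_iff₀ hkpos]; linarith [hLle]
    have hkh : (k:ℝ) * h = L := by rw [hh]; field_simp [hkpos.ne']
    have htel : Ef (t (k+1)) - Ef (t k) =
        ∑ j ∈ Finset.range k, (Ef (t k + ((j:ℕ)+1 : ℕ) * h) - Ef (t k + (j:ℕ) * h)) := by
      rw [Finset.sum_range_sub (fun j : ℕ => Ef (t k + (j:ℝ) * h))]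
      have e1 : t k + (k:ℝ) * h = t (k+1) := by rw [hkh, hL]; ring
      have e2 : t k + ((0:ℕ):ℝ) * h = t k := by norm_num
      rw [e1, e2]
    have hbound : ∀ j ∈ Finset.range k,
        |Ef (t k + ((j:ℕ)+1 : ℕ) * h) - Ef (t k + (j:ℕ) * h)| ≤
          C * h * lam (t k) ^ (-(2:ℝ) - a) := by
      intro j hj
      have hjk : (j:ℝ) + 1 ≤ (k:ℝ) := by exact_mod_cast Finset.mem_range.mp hj
      have hjnn : (0:ℝ) ≤ (j:ℝ) := Nat.cast_nonneg j
      have c1 : t k ≤ t k + (j:ℝ) * h := by linarith [mul_nonneg hjnn hhpos.le]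
      have c2 : t k + (j:ℝ) * h ≤ t k + ((j:ℝ)+1) * h := by linarith [hhpos.le]
      have c3 : t k + ((j:ℝ)+1) * h ≤ t (k+1) := by
        have : ((j:ℝ)+1) * h ≤ (k:ℝ) * h := mul_le_mul_of_nonneg_right hjk hhpos.le
        have e1 : t (k+1) = t k + (k:ℝ) * h := by rw [hkh, hL]; ring
        rw [e1]; linarith
      have c4 : (t k + ((j:ℝ)+1) * h) - (t k + (j:ℝ) * h) ≤ lam (t k) ^ (2:ℕ) := by
        have : (t k + ((j:ℝ)+1) * h) - (t k + (j:ℝ) * h) = h := by ring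
        rw [this]; exact hhle
      have := hloc k hk1 hk2 (t k + (j:ℝ) * h) (t k + ((j:ℝ)+1) * h) c1 c2 c3 c4
      have e : (t k + ((j:ℝ)+1) * h) - (t k + (j:ℝ) * h) = h := by ring
      rw [e] at this
      have ecast : ((((j:ℕ)+1 : ℕ)):ℝ) = (j:ℝ) + 1 := by push_cast; ring
      rw [ecast]
      exact this
    have hsum1 : |Ef (t (k+1)) - Ef (t k)| ≤ (k:ℝ) * (C * h * lam (t k) ^ (-(2:ℝ) - a)) := by
      rw [htel]
      calc |∑ j ∈ Finset.range k, (Ef (t k + ((j:ℕ)+1 : ℕ) * h) - Ef (t k + (j:ℕ) * h))|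
          ≤ ∑ j ∈ Finset.range k, |Ef (t k + ((j:ℕ)+1 : ℕ) * h) - Ef (t k + (j:ℕ) * h)| :=
            Finset.abs_sum_le_sum_abs _ _
        _ ≤ ∑ _j ∈ Finset.range k, C * h * lam (t k) ^ (-(2:ℝ) - a) :=
            Finset.sum_le_sum hbound
        _ = (k:ℝ) * (C * h * lam (t k) ^ (-(2:ℝ) - a)) := by
            rw [Finset.sum_const, Finset.card_range, nsmul_eq_mul]
    have hrw : lam (t k) ^ (2:ℕ) * lam (t k) ^ (-(2:ℝ) - a) = lam (t k) ^ (-a) := by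
      rw [← Real.rpow_natCast (lam (t k)) 2, ← Real.rpow_add hlp]
      congr 1
      push_cast
      ring
    have hlamr : lam (t k) ^ (-a) = r ^ k := by rw [hlamk]; exact hpow k
    have hexp_pos : (0:ℝ) < lam (t k) ^ (-(2:ℝ) - a) := Real.rpow_pos_of_pos hlp _
    have step : (k:ℝ) * (C * h * lam (t k) ^ (-(2:ℝ) - a))
        ≤ C * (k:ℝ) * r ^ k := by
      have : (k:ℝ) * (C * h * lam (t k) ^ (-(2:ℝ) - a))
          = C * L * lam (t k) ^ (-(2:ℝ) - a) := by rw [← hkh]; ring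
      rw [this]
      have h2 : C * L * lam (t k) ^ (-(2:ℝ) - a)
          ≤ C * ((k:ℝ) * lam (t k) ^ (2:ℕ)) * lam (t k) ^ (-(2:ℝ) - a) := by
        apply mul_le_mul_of_nonneg_right _ hexp_pos.le
        exact mul_le_mul_of_nonneg_left hLle hC.le
      have h3 : C * ((k:ℝ) * lam (t k) ^ (2:ℕ)) * lam (t k) ^ (-(2:ℝ) - a)
          = C * (k:ℝ) * (lam (t k) ^ (2:ℕ) * lam (t k) ^ (-(2:ℝ) - a)) := by ring
      rw [h3, hrw, hlamr] at h2
      exact h2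
    have hkkp : (k:ℝ) ≤ (kp:ℝ) := by exact_mod_cast hk2.le
    have : C * (k:ℝ) * r ^ k ≤ C * (kp:ℝ) * r ^ k := by
      have hrk : (0:ℝ) ≤ r ^ k := (pow_pos hrpos k).le
      exact mul_le_mul_of_nonneg_right (mul_le_mul_of_nonneg_left hkkp hC.le) hrk
    linarith [hsum1, step]
  -- summing over k
  set n := kp - k₀ with hn
  have hkn : k₀ + n = kp := Nat.add_sub_cancel' hk₀kp
  have htele : Ef T - Ef 0 = ∑ i ∈ Finset.range n, (Ef (t (k₀ + i + 1)) - Ef (t (k₀ + i))) := by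
    have h1 := Finset.sum_range_sub (fun i : ℕ => Ef (t (k₀ + i))) n
    rw [hkn] at h1
    rw [show Ef T - Ef 0 = Ef (t kp) - Ef (t (k₀ + 0)) by rw [Nat.add_zero, ht0, htT]]
    exact h1.symm
  have hsum : |Ef T - Ef 0| ≤ C * (kp:ℝ) * ∑ k ∈ Finset.range kp, r ^ k := by
    rw [htele]
    calc |∑ i ∈ Finset.range n, (Ef (t (k₀ + i + 1)) - Ef (t (k₀ + i)))|
        ≤ ∑ i ∈ Finset.range n, |Ef (t (k₀ + i + 1)) - Ef (t (k₀ + i))| :=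
          Finset.abs_sum_le_sum_abs _ _
      _ ≤ ∑ i ∈ Finset.range n, C * (kp:ℝ) * r ^ (k₀ + i) := by
          apply Finset.sum_le_sum
          intro i hi
          have hi' : i < n := Finset.mem_range.mp hi
          have h1 : k₀ ≤ k₀ + i := Nat.le_add_right _ _
          have h2 : k₀ + i < kp := by omega
          exact key (k₀ + i) h1 h2
      _ = C * (kp:ℝ) * ∑ i ∈ Finset.range n, r ^ (k₀ + i) := by
          rw [Finset.mul_sum]
      _ ≤ C * (kp:ℝ) * ∑ k ∈ Finset.range kp, r ^ k := by
          apply mul_le_mul_of_nonneg_left _ (by positivity)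
          rw [← Finset.sum_Ico_eq_sum_range]
          apply Finset.sum_le_sum_of_subset_of_nonneg
          · intro x hx
            rw [Finset.mem_Ico] at hx
            exact Finset.mem_range.mpr hx.2
          · intro x _ _
            exact (pow_pos hrpos x).le
  have hgeom : ∑ k ∈ Finset.range kp, r ^ k ≤ 3 * r ^ kp := by
    have hrne : r ≠ 1 := by linarith
    rw [geom_sum_eq hrne]
    rw [div_le_iff₀ (by linarith : (0:ℝ) < r - 1)]
    have hrk : (0:ℝ) ≤ r ^ kp := (pow_pos hrpos kp).le
    nlinarith
  have hlamT : lam T = (2:ℝ) ^ (-(kp:ℝ)) := by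
    rw [← htT]; exact hdyadic kp hk₀kp le_rfl
  have hlamTr : lam T ^ (-a) = r ^ kp := by rw [hlamT]; exact hpow kp
  have hlog : |Real.log (lam T)| = (kp:ℝ) * Real.log 2 := by
    rw [hlamT, Real.log_rpow (by norm_num : (0:ℝ) < 2), abs_mul, abs_neg,
      abs_of_nonneg (Nat.cast_nonneg kp), abs_of_nonneg (Real.log_nonneg (by norm_num))]
  have hmain : |Ef T - Ef 0| ≤ 3 * C * (kp:ℝ) * r ^ kp := by
    have h1 : C * (kp:ℝ) * ∑ k ∈ Finset.range kp, r ^ k ≤ C * (kp:ℝ) * (3 * r ^ kp) :=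
      mul_le_mul_of_nonneg_left hgeom (by positivity)
    calc |Ef T - Ef 0| ≤ C * (kp:ℝ) * ∑ k ∈ Finset.range kp, r ^ k := hsum
      _ ≤ C * (kp:ℝ) * (3 * r ^ kp) := h1
      _ = 3 * C * (kp:ℝ) * r ^ kp := by ring
  have hrkpos : (0:ℝ) < r ^ kp := pow_pos hrpos kp
  have hkppos : (0:ℝ) < (kp:ℝ) := by exact_mod_cast hkp1
  have hP : (0:ℝ) < C * (kp:ℝ) * r ^ kp := mul_pos (mul_pos hC hkppos) hrkpos
  have hlog2 : (2:ℝ)/3 ≤ Real.log 2 := by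
    have := Real.log_two_gt_d9
    linarith
  have hQ : (0:ℝ) ≤ C * (kp:ℝ) * r ^ kp * (Real.log 2 - 2/3) :=
    mul_nonneg hP.le (by linarith)
  clear hloc key hsum hgeom htele hdyadic hdouble hmono hmem hlampos hpow
  constructor
  · rw [hlamTr]
    linarith
  · rw [hlamTr, hlog]
    nlinarith [hP, hQ]
end
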